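/- Let q(t) be a differentiable curve of unit quaternions whose associated rotation matrix Λ(t) (via the Euler-Rodrigues map) satisfies Λ̇ = Λ Ω̂ for Ω(t) ∈ ℝ³. Then q̇ = (1/2) q Ω^♯. -/

import Mathlib

open Matrix Quaternion

/-- Embed a vector in `ℝ³` as a pure quaternion. -/
def sharp (Y : Fin 3 → ℝ) : Quaternion ℝ := ⟨0, Y 0, Y 1, Y 2⟩

/-- Extract the vector part of a quaternion. -/
def flat (p : Quaternion ℝ) : Fin 3 → ℝ := ![p.imI, p.imJ, p.imK]

/-- The hat map sending `ω` to the skew-symmetric matrix `ω̂` with `ω̂ v = ω ×₃ v`. -/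
def hat (ω : Fin 3 → ℝ) : Matrix (Fin 3) (Fin 3) ℝ :=
  !![0, -ω 2, ω 1; ω 2, 0, -ω 0; -ω 1, ω 0, 0]

noncomputable def imICLM : Quaternion ℝ →L[ℝ] ℝ :=
  ⟨QuaternionAlgebra.imIₗ _ _ _, Quaternion.continuous_imI⟩

noncomputable def imJCLM : Quaternion ℝ →L[ℝ] ℝ :=
  ⟨QuaternionAlgebra.imJₗ _ _ _, Quaternion.continuous_imJ⟩

noncomputable def imKCLM : Quaternion ℝ →L[ℝ] ℝ :=
  ⟨QuaternionAlgebra.imKₗ _ _ _, Quaternion.continuous_imK⟩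

instance : StarModule ℝ (Quaternion ℝ) :=
  ⟨fun r a => by apply QuaternionAlgebra.ext <;> simp⟩

instance : ContinuousStar (Quaternion ℝ) := by
  constructor
  have h : (fun a : Quaternion ℝ => star a)
      = fun a : Quaternion ℝ => ((a.re + a.re : ℝ) : Quaternion ℝ) - a := by
    funext a
    apply QuaternionAlgebra.ext <;> simp [Quaternion.re_coe]
  show Continuous fun a : Quaternion ℝ => star a
  rw [h]
  exact (Quaternion.continuous_coe.comp
    (Quaternion.continuous_re.add Quaternion.continuous_re)).sub continuous_id

lemma sharp_re (Y : Fin 3 → ℝ) : (sharp Y).re = 0 := rfl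

lemma sharp_imI (Y : Fin 3 → ℝ) : (sharp Y).imI = Y 0 := rfl

lemma sharp_imJ (Y : Fin 3 → ℝ) : (sharp Y).imJ = Y 1 := rfl

lemma sharp_imK (Y : Fin 3 → ℝ) : (sharp Y).imK = Y 2 := rfl

lemma sharp_star (Y : Fin 3 → ℝ) : star (sharp Y) = - sharp Y := by
  apply QuaternionAlgebra.ext <;> simp [sharp_re, sharp_imI, sharp_imJ, sharp_imK]

lemma re_of_star_eq_neg {x : Quaternion ℝ} (h : star x = -x) : x.re = 0 := by
  have := congrArg QuaternionAlgebra.re h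
  simp at this
  linarith

lemma sharp_flat {x : Quaternion ℝ} (h : x.re = 0) : sharp (flat x) = x := by
  apply QuaternionAlgebra.ext <;> simp [sharp, flat, h]

lemma conj_pure_star (a : Quaternion ℝ) (Y : Fin 3 → ℝ) :
    star (a * sharp Y * star a) = -(a * sharp Y * star a) := by
  simp only [StarMul.star_mul, star_star, sharp_star]
  noncomm_ring

theorem quaternion_kinematics
    (q q' : ℝ → Quaternion ℝ) (Λ Λ' : ℝ → Matrix (Fin 3) (Fin 3) ℝ)
    (Ω : ℝ → Fin 3 → ℝ)
    (hunit : ∀ t, ‖q t‖ = 1)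
    (hq : ∀ t, HasDerivAt q (q' t) t)
    (hΛ : ∀ t Y, (Λ t).mulVec Y = flat (q t * sharp Y * (q t)⁻¹))
    (hΛderiv : ∀ t i j, HasDerivAt (fun s => Λ s i j) (Λ' t i j) t)
    (hkin : ∀ t, Λ' t = Λ t * hat (Ω t)) (t : ℝ) :
    q' t = (1 / 2 : ℝ) • (q t * sharp (Ω t)) := by
  have hnormSq : ∀ s, normSq (q s) = 1 := fun s => by
    rw [Quaternion.normSq_eq_norm_mul_self, hunit s, one_mul]
  have hinv : ∀ s, (q s)⁻¹ = star (q s) := fun s => by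
    rw [Quaternion.inv_def, hnormSq s]; simp
  set Q := q t with hQdef
  have hQne : Q ≠ 0 := by
    intro h
    have := hunit t
    rw [← hQdef, h, norm_zero] at this
    norm_num at this
  have hQsne : star Q ≠ 0 := star_ne_zero.mpr hQne
  have hQsQ : star Q * Q = 1 := by
    rw [Quaternion.star_mul_self, hnormSq t]; norm_num
  have hQQs : Q * star Q = 1 := by
    rw [Quaternion.self_mul_star, hnormSq t]; norm_num
  -- Step A: p := star Q * q' t is a pure quaternion
  have hA : star (q' t) * q t + star (q t) * q' t = 0 := by
    have h1 : HasDerivAt (fun s => star (q s) * q s)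
        (star (q' t) * q t + star (q t) * q' t) t := (hq t).star.mul (hq t)
    have h2 : (fun s => star (q s) * q s) = fun _ => (1 : Quaternion ℝ) := by
      funext s
      rw [Quaternion.star_mul_self, hnormSq s]; norm_num
    rw [h2] at h1
    exact h1.unique (hasDerivAt_const _ _)
  set p := star Q * q' t with hpdef
  have hpstar : star p = -p := by
    have h : star p = star (q' t) * Q := by rw [hpdef, StarMul.star_mul, star_star]
    rw [h]
    have h2 := hA
    rw [← hQdef] at h2
    exact eq_neg_of_add_eq_zero_left h2
  have hq'p : q' t = Q * p := by
    rw [hpdef, ← mul_assoc, hQQs, one_mul]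
  -- Step B: the key pointwise identity
  have key : ∀ Y : Fin 3 → ℝ,
      p * sharp Y - sharp Y * p = sharp ((hat (Ω t)).mulVec Y) := by
    intro Y
    set D := q' t * sharp Y * star Q + Q * sharp Y * star (q' t) with hD
    have gderiv : HasDerivAt (fun s => q s * sharp Y * star (q s)) D t := by
      have h := ((hq t).fun_mul (hasDerivAt_const t (sharp Y))).fun_mul (hq t).star
      simpa [hD, ← hQdef] using h
    have hDstar : star D = -D := by
      rw [hD]
      simp only [star_add, StarMul.star_mul, star_star, sharp_star]
      noncomm_ring
    have hDre : D.re = 0 := re_of_star_eq_neg hDstar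
    have hMder : ∀ i, HasDerivAt (fun s => (Λ s).mulVec Y i) ((Λ' t).mulVec Y i) t := by
      intro i
      simp only [Matrix.mulVec, dotProduct]
      exact HasDerivAt.fun_sum fun j _ => (hΛderiv t i j).mul_const (Y j)
    have hfun : ∀ i, (fun s => (Λ s).mulVec Y i)
        = fun s => flat (q s * sharp Y * star (q s)) i := by
      intro i; funext s; rw [hΛ s Y, hinv s]
    have hDimI : D.imI = (Λ' t).mulVec Y 0 := by
      have h1 : HasDerivAt (fun s => (q s * sharp Y * star (q s)).imI) D.imI t :=
        imICLM.hasFDerivAt.comp_hasDerivAt t gderiv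
      have h2 := hMder 0
      rw [hfun 0] at h2
      exact h1.unique (by simpa [flat] using h2)
    have hDimJ : D.imJ = (Λ' t).mulVec Y 1 := by
      have h1 : HasDerivAt (fun s => (q s * sharp Y * star (q s)).imJ) D.imJ t :=
        imJCLM.hasFDerivAt.comp_hasDerivAt t gderiv
      have h2 := hMder 1
      rw [hfun 1] at h2
      exact h1.unique (by simpa [flat] using h2)
    have hDimK : D.imK = (Λ' t).mulVec Y 2 := by
      have h1 : HasDerivAt (fun s => (q s * sharp Y * star (q s)).imK) D.imK t :=
        imKCLM.hasFDerivAt.comp_hasDerivAt t gderiv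
      have h2 := hMder 2
      rw [hfun 2] at h2
      exact h1.unique (by simpa [flat] using h2)
    have hZ : (Λ' t).mulVec Y = flat (Q * sharp ((hat (Ω t)).mulVec Y) * star Q) := by
      rw [hkin t, ← Matrix.mulVec_mulVec, hΛ t, hinv t]
    have hDeq : D = Q * sharp ((hat (Ω t)).mulVec Y) * star Q := by
      have h1 : D = sharp ((Λ' t).mulVec Y) := by
        apply QuaternionAlgebra.ext <;>
          simp [sharp_re, sharp_imI, sharp_imJ, sharp_imK, hDre, hDimI, hDimJ, hDimK]
      rw [h1, hZ, sharp_flat (re_of_star_eq_neg (conj_pure_star _ _))]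
    have e2 : D = Q * (p * sharp Y - sharp Y * p) * star Q := by
      rw [hD, hq'p, StarMul.star_mul, hpstar]
      noncomm_ring
    have h3 : Q * (p * sharp Y - sharp Y * p) * star Q
        = Q * sharp ((hat (Ω t)).mulVec Y) * star Q := by
      rw [← e2, hDeq]
    exact mul_left_cancel₀ hQne (mul_right_cancel₀ hQsne h3)
  have hpre : p.re = 0 := re_of_star_eq_neg hpstar
  have k0 := key ![1, 0, 0]
  have k1 := key ![0, 1, 0]
  have k2 := key ![0, 0, 1]
  have hps : p = (1 / 2 : ℝ) • sharp (Ω t) := by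
    have e1 := congrArg QuaternionAlgebra.imK k1
    have e2 := congrArg QuaternionAlgebra.imJ k0
    have e3 := congrArg QuaternionAlgebra.imI k2
    simp [Quaternion.imI_mul, Quaternion.imJ_mul, Quaternion.imK_mul, sharp_re, sharp_imI, sharp_imJ, sharp_imK, hat,
      Matrix.mulVec, dotProduct, Fin.sum_univ_three] at e1 e2 e3
    apply QuaternionAlgebra.ext <;>
      simp [sharp_re, sharp_imI, sharp_imJ, sharp_imK, hpre] <;> linarith
  rw [hq'p, hps, mul_smul_comm]
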